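/- arXiv:2506.09776 — 2 statements merged into one kernel-verified Lean document; each statement's English description precedes it below -/
import Mathlib

section
/- Let Σ, Σ̂ be n×n positive semidefinite symmetric matrices with Gelbrich distance G(Σ, Σ̂) ≤ ε, where G(Σ, Σ̂) = sqrt(tr(Σ + Σ̂ − 2(Σ̂^{1/2} Σ Σ̂^{1/2})^{1/2})). Then λ_max(Σ)^{1/2} ≤ λ_max(Σ̂)^{1/2} + ε. -/
open Matrix

open scoped ComplexOrder in
/-- The positive semidefinite square root of a positive semidefinite matrix
(the definition `Matrix.PosSemidef.sqrt` of the older Mathlib, since removed). -/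
noncomputable def Matrix.PosSemidef.sqrt {n : Type*} [Fintype n] [DecidableEq n] {𝕜 : Type*}
    [RCLike 𝕜] {A : Matrix n n 𝕜} (hA : A.PosSemidef) : Matrix n n 𝕜 :=
  hA.1.eigenvectorUnitary.1 * diagonal ((↑) ∘ (√·) ∘ hA.1.eigenvalues) *
  (star hA.1.eigenvectorUnitary : Matrix n n 𝕜)

lemma Matrix.PosSemidef.sqrt_eq_cfc' {m : ℕ} {P : Matrix (Fin m) (Fin m) ℝ}
    (hP : P.PosSemidef) : hP.sqrt = cfc Real.sqrt P := by
  rw [hP.isHermitian.cfc_eq Real.sqrt]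
  exact rfl

open scoped MatrixOrder in
lemma Matrix.PosSemidef.posSemidef_sqrt {m : ℕ} {P : Matrix (Fin m) (Fin m) ℝ}
    (hP : P.PosSemidef) : hP.sqrt.PosSemidef := by
  rw [hP.sqrt_eq_cfc']
  exact Matrix.nonneg_iff_posSemidef.mp (cfc_nonneg fun x _ => Real.sqrt_nonneg x)

open scoped MatrixOrder in
lemma Matrix.PosSemidef.sqrt_mul_self {m : ℕ} {P : Matrix (Fin m) (Fin m) ℝ}
    (hP : P.PosSemidef) : hP.sqrt * hP.sqrt = P := by
  have h0 : (0 : Matrix (Fin m) (Fin m) ℝ) ≤ P := Matrix.nonneg_iff_posSemidef.mpr hP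
  rw [hP.sqrt_eq_cfc', ← cfc_mul (fun x => Real.sqrt x) (fun x => Real.sqrt x) P]
  conv_rhs => rw [← cfc_id' ℝ P]
  exact cfc_congr fun x hx => Real.mul_self_sqrt (spectrum_nonneg_of_nonneg h0 hx)

namespace GelbrichAux
variable {m : ℕ}

lemma psd_quad {M : Matrix (Fin m) (Fin m) ℝ} (hM : M.PosSemidef) (x : Fin m → ℝ) :
    0 ≤ x ⬝ᵥ M *ᵥ x := by simpa using hM.dotProduct_mulVec_nonneg x

lemma herm_dot {M : Matrix (Fin m) (Fin m) ℝ} (hM : M.IsHermitian) (x y : Fin m → ℝ) :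
    x ⬝ᵥ M *ᵥ y = (M *ᵥ x) ⬝ᵥ y := by
  rw [dotProduct_mulVec, ← Matrix.mulVec_transpose]
  congr 1
  rw [← Matrix.conjTranspose_eq_transpose_of_trivial, hM.eq]

lemma dot_self_nonneg (x : Fin m → ℝ) : 0 ≤ x ⬝ᵥ x :=
  Finset.sum_nonneg fun i _ => mul_self_nonneg _

lemma dot_sq_le (v w : Fin m → ℝ) : (v ⬝ᵥ w)^2 ≤ (v ⬝ᵥ v) * (w ⬝ᵥ w) := by
  have h := Finset.sum_mul_sq_le_sq_mul_sq Finset.univ v w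
  simp only [pow_two] at h ⊢
  simpa [dotProduct] using h

lemma psd_trace_nonneg {M : Matrix (Fin m) (Fin m) ℝ} (hM : M.PosSemidef) : 0 ≤ M.trace := by
  rw [Matrix.trace]
  apply Finset.sum_nonneg
  intro i _
  have h := psd_quad hM (Pi.single i 1)
  simpa [Matrix.mulVec_single, Matrix.diag] using h

lemma psd_trace_mul_nonneg {P Q : Matrix (Fin m) (Fin m) ℝ} (hP : P.PosSemidef)
    (hQ : Q.PosSemidef) : 0 ≤ (P * Q).trace := by
  obtain ⟨R, hRH, hRR⟩ : ∃ R : Matrix (Fin m) (Fin m) ℝ, R.IsHermitian ∧ R * R = P :=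
    ⟨hP.sqrt, hP.posSemidef_sqrt.isHermitian, hP.sqrt_mul_self⟩
  have h1 : P * Q = R * (R * Q) := by rw [← Matrix.mul_assoc, hRR]
  rw [h1, Matrix.trace_mul_comm]
  have h3 : (Rᴴ * Q * R).PosSemidef := hQ.conjTranspose_mul_mul_same _
  rw [hRH.eq] at h3
  exact psd_trace_nonneg h3

lemma vecMulVec_mulVec' (y z : Fin m → ℝ) :
    (Matrix.vecMulVec y y) *ᵥ z = (y ⬝ᵥ z) • y := by
  ext i
  simp [Matrix.mulVec, Matrix.vecMulVec_apply, dotProduct, Finset.mul_sum, mul_comm,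
    mul_assoc, mul_left_comm]

lemma trace_vecMulVec_mul (y : Fin m → ℝ) (N : Matrix (Fin m) (Fin m) ℝ) :
    (Matrix.vecMulVec y y * N).trace = y ⬝ᵥ N *ᵥ y := by
  rw [Matrix.trace]
  simp only [Matrix.diag, Matrix.mul_apply, Matrix.vecMulVec_apply, dotProduct,
    Matrix.mulVec]
  rw [Finset.sum_comm]
  apply Finset.sum_congr rfl
  intro j _
  simp [dotProduct, Finset.mul_sum, mul_comm, mul_left_comm]

lemma trace_vecMulVec (y : Fin m → ℝ) : (Matrix.vecMulVec y y).trace = y ⬝ᵥ y := by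
  simp [Matrix.trace, Matrix.diag, Matrix.vecMulVec_apply, dotProduct]

lemma smul_vecMulVec_posSemidef {t : ℝ} (ht : 0 ≤ t) (y : Fin m → ℝ) :
    (t • Matrix.vecMulVec y y).PosSemidef := by
  refine Matrix.PosSemidef.of_dotProduct_mulVec_nonneg ?_ ?_
  · unfold Matrix.IsHermitian
    ext i j
    simp [Matrix.vecMulVec_apply, mul_comm]
  · intro x
    simp only [star_trivial, Matrix.smul_mulVec, dotProduct_smul]
    rw [vecMulVec_mulVec']
    rw [dotProduct_smul]
    have : x ⬝ᵥ y = y ⬝ᵥ x := dotProduct_comm _ _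
    simp only [smul_eq_mul]
    rw [this]
    exact mul_nonneg ht (mul_self_nonneg _)

lemma key_ineq {A B Q : Matrix (Fin m) (Fin m) ℝ}
    (hA : A.PosSemidef) (hB : B.PosSemidef) (hQ : Q.PosSemidef)
    (hQ2 : Q * Q = hB.sqrt * A * hB.sqrt)
    {a : ℝ} (ha : 0 ≤ a) {v : Fin m → ℝ} (hv : v ⬝ᵥ v = 1) (hAv : A *ᵥ v = a • v)
    {t : ℝ} (ht : 0 ≤ t) :
    a - a / (t + 1) - t * (v ⬝ᵥ B *ᵥ v) ≤ A.trace + B.trace - 2 * Q.trace := by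
  set Bh : Matrix (Fin m) (Fin m) ℝ := hB.sqrt with hBh
  have hBhpsd : Bh.PosSemidef := hB.posSemidef_sqrt
  have hBhH : Bh.IsHermitian := hBhpsd.isHermitian
  have hBh2 : Bh * Bh = B := hB.sqrt_mul_self
  set y : Fin m → ℝ := Bh *ᵥ v with hy
  set β : ℝ := v ⬝ᵥ B *ᵥ v with hβ
  have hBquad : ∀ z : Fin m → ℝ, z ⬝ᵥ B *ᵥ z = (Bh *ᵥ z) ⬝ᵥ (Bh *ᵥ z) := by
    intro z
    rw [← hBh2, ← Matrix.mulVec_mulVec, herm_dot hBhH]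
  have hβy : y ⬝ᵥ y = β := (hBquad v).symm
  have hβ0 : 0 ≤ β := psd_quad hB v
  -- the A-residual
  set Ar : Matrix (Fin m) (Fin m) ℝ := A - a • Matrix.vecMulVec v v with hAr
  have hAdecomp : A = a • Matrix.vecMulVec v v + Ar := by rw [hAr]; abel
  have hAr_psd : Ar.PosSemidef := by
    refine Matrix.PosSemidef.of_dotProduct_mulVec_nonneg ?_ ?_
    · exact hA.isHermitian.sub (smul_vecMulVec_posSemidef ha v).isHermitian
    · intro x
      simp only [star_trivial]
      set c : ℝ := v ⬝ᵥ x with hc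
      set w : Fin m → ℝ := x - c • v with hww
      have hvw : v ⬝ᵥ w = 0 := by
        rw [hww, dotProduct_sub, dotProduct_smul, hv]
        simp [hc]
      have hwv : w ⬝ᵥ v = 0 := by rw [dotProduct_comm]; exact hvw
      have hxw : x = w + c • v := by rw [hww]; abel
      have hvAw : v ⬝ᵥ A *ᵥ w = 0 := by
        rw [herm_dot hA.isHermitian, hAv, smul_dotProduct, hvw]
        simp
      have hq1 : x ⬝ᵥ A *ᵥ x = w ⬝ᵥ A *ᵥ w + a * (c * c) := by
        nth_rewrite 1 [hxw]
        nth_rewrite 1 [hxw]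
        rw [Matrix.mulVec_add, Matrix.mulVec_smul, hAv, dotProduct_add,
          add_dotProduct, add_dotProduct, dotProduct_smul,
          smul_dotProduct, smul_dotProduct, dotProduct_smul,
          hvAw, hwv]
        simp only [dotProduct_smul, smul_eq_mul, hv]
        ring
      have hq2 : x ⬝ᵥ Ar *ᵥ x = x ⬝ᵥ A *ᵥ x - a * (c * c) := by
        rw [hAr, Matrix.sub_mulVec, dotProduct_sub, Matrix.smul_mulVec,
          dotProduct_smul, vecMulVec_mulVec', dotProduct_smul]
        have hcx : x ⬝ᵥ v = c := by rw [dotProduct_comm]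
        rw [hcx]
        try simp only [smul_eq_mul]
        try ring
      rw [hq2, hq1]
      have := psd_quad hA w
      linarith
  have hArtr : Ar.trace = A.trace - a := by
    rw [hAr, Matrix.trace_sub, Matrix.trace_smul, trace_vecMulVec, hv]
    simp
  have main : ∀ δ : ℝ, 0 < δ →
      2 * Q.trace ≤ a / (t + 1) + (A.trace - a) + (t * β + B.trace + δ * m) := by
    intro δ hδ
    set T : Matrix (Fin m) (Fin m) ℝ :=
      t • Matrix.vecMulVec y y + B + δ • (1 : Matrix (Fin m) (Fin m) ℝ) with hT
    have hTpsd0 : (t • Matrix.vecMulVec y y + B).PosSemidef :=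
      (smul_vecMulVec_posSemidef ht y).add hB
    have hδ1 : (δ • (1 : Matrix (Fin m) (Fin m) ℝ)).PosDef := by
      rw [Matrix.smul_one_eq_diagonal]
      exact Matrix.PosDef.diagonal fun _ => hδ
    have hTpd : T.PosDef := Matrix.PosDef.posSemidef_add hTpsd0 hδ1
    have hdet : IsUnit T.det := (Matrix.isUnit_iff_isUnit_det T).mp hTpd.isUnit
    have hTinv : T⁻¹.PosDef := hTpd.inv
    have h1 : T * T⁻¹ = 1 := Matrix.mul_nonsing_inv _ hdet
    have h2 : T⁻¹ * T = 1 := Matrix.nonsing_inv_mul _ hdet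
    have hTquad : ∀ z : Fin m → ℝ,
        z ⬝ᵥ T *ᵥ z = t * (y ⬝ᵥ z) * (y ⬝ᵥ z) + (Bh *ᵥ z) ⬝ᵥ (Bh *ᵥ z) + δ * (z ⬝ᵥ z) := by
      intro z
      rw [hT]
      rw [Matrix.add_mulVec, Matrix.add_mulVec, dotProduct_add, dotProduct_add]
      rw [Matrix.smul_mulVec, vecMulVec_mulVec', Matrix.smul_mulVec,
        Matrix.one_mulVec]
      rw [dotProduct_smul, dotProduct_smul, dotProduct_smul]
      rw [← hBquad z]
      have hzy : z ⬝ᵥ y = y ⬝ᵥ z := dotProduct_comm _ _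
      simp only [smul_eq_mul, hzy]
      ring
    -- Step 1 : completion of the square
    have htr1 : 2 * Q.trace ≤ (Q * Q * T⁻¹).trace + T.trace := by
      have hXH : (Q - T).IsHermitian := hQ.isHermitian.sub hTpd.isHermitian
      have hpsd : ((Q - T)ᴴ * T⁻¹ * (Q - T)).PosSemidef :=
        hTinv.posSemidef.conjTranspose_mul_mul_same _
      rw [hXH.eq] at hpsd
      have e : (Q - T) * T⁻¹ * (Q - T)
          = Q * T⁻¹ * Q - Q * (T⁻¹ * T) - (T * T⁻¹) * Q + (T * T⁻¹) * T := by
        noncomm_ring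
      rw [h1, h2, Matrix.mul_one, Matrix.one_mul, Matrix.one_mul] at e
      have hge := psd_trace_nonneg hpsd
      rw [e, Matrix.trace_add, Matrix.trace_sub, Matrix.trace_sub] at hge
      have hcyc : (Q * T⁻¹ * Q).trace = (Q * Q * T⁻¹).trace := Matrix.trace_mul_cycle Q T⁻¹ Q
      linarith
    -- Step 2 : split of the trace
    have hsplit : (Q * Q * T⁻¹).trace
        = a * (y ⬝ᵥ T⁻¹ *ᵥ y) + (Ar * (Bh * T⁻¹ * Bh)).trace := by
      have c1 : (Q * Q * T⁻¹).trace = (A * (Bh * T⁻¹ * Bh)).trace := by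
        rw [hQ2]
        rw [show Bh * A * Bh * T⁻¹ = Bh * (A * (Bh * T⁻¹)) by noncomm_ring,
          Matrix.trace_mul_comm,
          show A * (Bh * T⁻¹) * Bh = A * (Bh * T⁻¹ * Bh) by noncomm_ring]
      rw [c1]
      nth_rewrite 1 [hAdecomp]
      rw [Matrix.add_mul, Matrix.smul_mul, Matrix.trace_add, Matrix.trace_smul,
        trace_vecMulVec_mul]
      have c2 : v ⬝ᵥ (Bh * T⁻¹ * Bh) *ᵥ v = y ⬝ᵥ T⁻¹ *ᵥ y := by
        rw [← Matrix.mulVec_mulVec, ← Matrix.mulVec_mulVec, herm_dot hBhH]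
      rw [c2]
      simp only [smul_eq_mul]
    -- Step 3 : y T⁻¹ y ≤ 1/(t+1)
    have hp : y ⬝ᵥ T⁻¹ *ᵥ y ≤ 1 / (t + 1) := by
      set z : Fin m → ℝ := T⁻¹ *ᵥ y with hz
      have hTz : T *ᵥ z = y := by rw [hz, Matrix.mulVec_mulVec, h1, Matrix.one_mulVec]
      have h5 : y ⬝ᵥ z = z ⬝ᵥ T *ᵥ z := by
        rw [hTz]; exact dotProduct_comm _ _
      have h6 : y ⬝ᵥ z
          = t * (y ⬝ᵥ z) * (y ⬝ᵥ z) + (Bh *ᵥ z) ⬝ᵥ (Bh *ᵥ z) + δ * (z ⬝ᵥ z) :=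
        h5.trans (hTquad z)
      have h7 : y ⬝ᵥ z = v ⬝ᵥ (Bh *ᵥ z) := by rw [hy, herm_dot hBhH]
      have hCS : (y ⬝ᵥ z)^2 ≤ (Bh *ᵥ z) ⬝ᵥ (Bh *ᵥ z) := by
        have := dot_sq_le v (Bh *ᵥ z)
        rw [← h7, hv, one_mul] at this
        exact this
      have h0z : 0 ≤ z ⬝ᵥ z := dot_self_nonneg _
      have ht1 : (0:ℝ) < t + 1 := by linarith
      have hq : (t + 1) * (y ⬝ᵥ z) ≤ 1 := by
        nlinarith [sq_nonneg ((t+1) * (y ⬝ᵥ z) - 1), mul_nonneg hδ.le h0z, sq_nonneg (y ⬝ᵥ z)]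
      rw [le_div_iff₀ ht1, mul_comm]
      exact hq
    -- Step 4 : contraction bound
    have hX1 : (Bh * T⁻¹ * Bh).PosSemidef := by
      have h := hTinv.posSemidef.conjTranspose_mul_mul_same Bh
      rwa [hBhH.eq] at h
    have hX1le : ∀ x : Fin m → ℝ, x ⬝ᵥ (Bh * T⁻¹ * Bh) *ᵥ x ≤ x ⬝ᵥ x := by
      intro x
      set u : Fin m → ℝ := Bh *ᵥ x with hu
      set w : Fin m → ℝ := T⁻¹ *ᵥ u with hw
      have hTw : T *ᵥ w = u := by rw [hw, Matrix.mulVec_mulVec, h1, Matrix.one_mulVec]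
      have e0 : x ⬝ᵥ (Bh * T⁻¹ * Bh) *ᵥ x = u ⬝ᵥ w := by
        rw [← Matrix.mulVec_mulVec, ← Matrix.mulVec_mulVec, herm_dot hBhH, hw]
      have e1 : u ⬝ᵥ w = t * (y ⬝ᵥ w) * (y ⬝ᵥ w) + (Bh *ᵥ w) ⬝ᵥ (Bh *ᵥ w) + δ * (w ⬝ᵥ w) := by
        calc u ⬝ᵥ w = w ⬝ᵥ T *ᵥ w := by rw [hTw]; exact dotProduct_comm _ _
        _ = _ := hTquad w
      have e2 : u ⬝ᵥ w = x ⬝ᵥ (Bh *ᵥ w) := by rw [hu, herm_dot hBhH]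
      have hCS : (u ⬝ᵥ w)^2 ≤ (x ⬝ᵥ x) * ((Bh *ᵥ w) ⬝ᵥ (Bh *ᵥ w)) := by
        rw [e2]; exact dot_sq_le _ _
      have h0 : 0 ≤ (Bh *ᵥ w) ⬝ᵥ (Bh *ᵥ w) := dot_self_nonneg _
      have h0w : 0 ≤ w ⬝ᵥ w := dot_self_nonneg _
      have h0x : 0 ≤ x ⬝ᵥ x := dot_self_nonneg _
      have hge : (0:ℝ) ≤ u ⬝ᵥ w - (Bh *ᵥ w) ⬝ᵥ (Bh *ᵥ w) := by
        nlinarith [mul_nonneg ht (sq_nonneg (y ⬝ᵥ w)), mul_nonneg hδ.le h0w]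
      rw [e0]
      nlinarith [mul_nonneg ht (sq_nonneg (y ⬝ᵥ w)), mul_nonneg hδ.le h0w, sq_nonneg (y ⬝ᵥ w),
        mul_nonneg h0x hge]
    have hIm : ((1 : Matrix (Fin m) (Fin m) ℝ) - Bh * T⁻¹ * Bh).PosSemidef := by
      refine Matrix.PosSemidef.of_dotProduct_mulVec_nonneg ?_ ?_
      · exact (Matrix.isHermitian_one).sub hX1.isHermitian
      · intro x
        simp only [star_trivial, Matrix.sub_mulVec, Matrix.one_mulVec, dotProduct_sub]
        have := hX1le x
        linarith
    have h4 : (Ar * (Bh * T⁻¹ * Bh)).trace ≤ Ar.trace := by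
      have h := psd_trace_mul_nonneg hAr_psd hIm
      rw [Matrix.mul_sub, Matrix.mul_one, Matrix.trace_sub] at h
      linarith
    -- Step 5 : trace of T
    have hTtr : T.trace = t * β + B.trace + δ * m := by
      rw [hT, Matrix.trace_add, Matrix.trace_add, Matrix.trace_smul, trace_vecMulVec, hβy,
        Matrix.trace_smul, Matrix.trace_one]
      simp [Fintype.card_fin]
    -- combine
    have ha_p : a * (y ⬝ᵥ T⁻¹ *ᵥ y) ≤ a * (1 / (t + 1)) := mul_le_mul_of_nonneg_left hp ha
    rw [hsplit, hTtr] at htr1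
    rw [hArtr] at h4
    have : a * (1 / (t+1)) = a / (t+1) := mul_one_div a (t+1)
    linarith
  have hfinal : 2 * Q.trace ≤ a / (t + 1) + (A.trace - a) + (t * β + B.trace) := by
    apply le_of_forall_sub_le
    intro η hη
    have hmain := main (η / (m + 1)) (by positivity)
    have hm : (η / (m + 1)) * m ≤ η := by
      rw [div_mul_eq_mul_div, div_le_iff₀ (by positivity)]
      nlinarith [hη]
    linarith
  linarith


lemma dot_self_eigenvectorBasis {M : Matrix (Fin m) (Fin m) ℝ} (hM : M.IsHermitian) (i : Fin m) :
    (⇑(hM.eigenvectorBasis i) : Fin m → ℝ) ⬝ᵥ ⇑(hM.eigenvectorBasis i) = 1 := by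
  have h := hM.eigenvectorBasis.orthonormal.1 i
  have h2 : (inner ℝ (hM.eigenvectorBasis i) (hM.eigenvectorBasis i) : ℝ) = 1 := by
    rw [real_inner_self_eq_norm_sq, h]; norm_num
  rw [← h2, PiLp.inner_apply]
  simp [dotProduct, mul_comm, pow_two]

lemma rayleigh_le [Nonempty (Fin m)] {M : Matrix (Fin m) (Fin m) ℝ} (hM : M.IsHermitian)
    (x : Fin m → ℝ) :
    x ⬝ᵥ M *ᵥ x ≤ (⨆ i, hM.eigenvalues i) * (x ⬝ᵥ x) := by
  set U : Matrix (Fin m) (Fin m) ℝ := (hM.eigenvectorUnitary : Matrix (Fin m) (Fin m) ℝ) with hU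
  have hUU : U * star U = 1 := (Matrix.mem_unitaryGroup_iff).mp (hM.eigenvectorUnitary).2
  have hsU : star U = Uᵀ := by
    rw [Matrix.star_eq_conjTranspose, Matrix.conjTranspose_eq_transpose_of_trivial]
  set w : Fin m → ℝ := Uᵀ *ᵥ x with hw
  have hxw : x ⬝ᵥ x = w ⬝ᵥ w := by
    rw [hw, dotProduct_mulVec, Matrix.vecMul_transpose]
    nth_rewrite 1 [show x = (U * Uᵀ) *ᵥ x by rw [← hsU, hUU, Matrix.one_mulVec]]
    rw [← Matrix.mulVec_mulVec, dotProduct_comm]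
  have hspec : x ⬝ᵥ M *ᵥ x = ∑ i, hM.eigenvalues i * (w i)^2 := by
    nth_rewrite 1 [hM.spectral_theorem]
    rw [Unitary.conjStarAlgAut_apply, ← hU, hsU]
    rw [← Matrix.mulVec_mulVec, ← Matrix.mulVec_mulVec]
    rw [dotProduct_mulVec (v := x) (A := U), ← Matrix.mulVec_transpose]
    simp only [← hw, dotProduct, Matrix.mulVec_diagonal]
    apply Finset.sum_congr rfl
    intro i _
    simp [RCLike.ofReal]
    ring
  rw [hspec, hxw]
  rw [dotProduct, Finset.mul_sum]
  apply Finset.sum_le_sum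
  intro i _
  have h1 : hM.eigenvalues i ≤ ⨆ j, hM.eigenvalues j :=
    le_ciSup (Set.Finite.bddAbove (Set.finite_range _)) i
  calc hM.eigenvalues i * w i ^ 2 ≤ (⨆ j, hM.eigenvalues j) * w i ^ 2 := by
        apply mul_le_mul_of_nonneg_right h1 (sq_nonneg _)
    _ = (⨆ j, hM.eigenvalues j) * (w i * w i) := by ring

end GelbrichAux

open GelbrichAux in
theorem stmt_8 {n : ℕ} (ε : ℝ) (hε : 0 ≤ ε) (S Shat : Matrix (Fin n) (Fin n) ℝ)
    (hS : S.PosSemidef) (hShat : Shat.PosSemidef)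
    (hM : (hShat.sqrt * S * hShat.sqrt).PosSemidef)
    (hG : Real.sqrt ((S + Shat - (2 : ℝ) • hM.sqrt).trace) ≤ ε) :
    Real.sqrt (⨆ i, hS.isHermitian.eigenvalues i)
      ≤ Real.sqrt (⨆ i, hShat.isHermitian.eigenvalues i) + ε := by
  rcases isEmpty_or_nonempty (Fin n) with hE | hNE
  · rw [iSup_of_empty', iSup_of_empty', Real.sSup_empty, Real.sqrt_zero]
    linarith
  · obtain ⟨i₀, hi₀⟩ := exists_eq_ciSup_of_finite (f := hS.isHermitian.eigenvalues)
    rw [← hi₀]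
    have hv1 : (⇑(hS.isHermitian.eigenvectorBasis i₀) : Fin n → ℝ) ⬝ᵥ
        ⇑(hS.isHermitian.eigenvectorBasis i₀) = 1 := dot_self_eigenvectorBasis hS.isHermitian i₀
    have hAv : S *ᵥ ⇑(hS.isHermitian.eigenvectorBasis i₀)
        = hS.isHermitian.eigenvalues i₀ • ⇑(hS.isHermitian.eigenvectorBasis i₀) :=
      hS.isHermitian.mulVec_eigenvectorBasis i₀
    set v : Fin n → ℝ := ⇑(hS.isHermitian.eigenvectorBasis i₀) with hvdef
    set a : ℝ := hS.isHermitian.eigenvalues i₀ with hadef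
    have ha0 : 0 ≤ a := hS.eigenvalues_nonneg i₀
    set β : ℝ := v ⬝ᵥ Shat *ᵥ v with hβdef
    have hβ0 : 0 ≤ β := psd_quad hShat v
    have hβb : β ≤ ⨆ i, hShat.isHermitian.eigenvalues i := by
      have h := rayleigh_le hShat.isHermitian v
      rw [hv1, mul_one] at h
      exact h
    have hsqβb : Real.sqrt β ≤ Real.sqrt (⨆ i, hShat.isHermitian.eigenvalues i) :=
      Real.sqrt_le_sqrt hβb
    have hb0' : 0 ≤ Real.sqrt (⨆ i, hShat.isHermitian.eigenvalues i) := Real.sqrt_nonneg _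
    set D : ℝ := (S + Shat - (2 : ℝ) • hM.sqrt).trace with hDdef
    have hDval : D = S.trace + Shat.trace - 2 * (hM.sqrt).trace := by
      rw [hDdef, Matrix.trace_sub, Matrix.trace_add, Matrix.trace_smul]
      simp
    have hQpsd : (hM.sqrt).PosSemidef := hM.posSemidef_sqrt
    have hQ2 : hM.sqrt * hM.sqrt = hShat.sqrt * S * hShat.sqrt := hM.sqrt_mul_self
    have key : ∀ t : ℝ, 0 ≤ t → a - a / (t + 1) - t * β ≤ D := by
      intro t ht
      rw [hDval]
      exact key_ineq hS hShat hQpsd hQ2 ha0 hv1 hAv ht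
    by_cases hab : a ≤ β
    · calc Real.sqrt a ≤ Real.sqrt β := Real.sqrt_le_sqrt hab
        _ ≤ Real.sqrt (⨆ i, hShat.isHermitian.eigenvalues i) := hsqβb
        _ ≤ _ + ε := by linarith
    · push_neg at hab
      by_cases hβz : β = 0
      · have hapos : 0 < a := by rw [hβz] at hab; exact hab
        have haD : a ≤ D := by
          apply le_of_forall_sub_le
          intro η hη
          have hk := key (a / η) (by positivity)
          rw [hβz, mul_zero, sub_zero] at hk
          have h2 : a / (a / η + 1) ≤ η := by
            rw [div_le_iff₀ (by positivity)]
            have hid : η * (a / η + 1) = a + η := by field_simp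
            rw [hid]
            linarith
          linarith
        have hsqaD : Real.sqrt a ≤ ε := le_trans (Real.sqrt_le_sqrt haD) hG
        linarith
      · have hβpos : 0 < β := lt_of_le_of_ne hβ0 (Ne.symm hβz)
        have hapos : 0 < a := lt_trans hβpos hab
        have hsa : 0 < Real.sqrt a := Real.sqrt_pos.mpr hapos
        have hsβ : 0 < Real.sqrt β := Real.sqrt_pos.mpr hβpos
        set t : ℝ := Real.sqrt a / Real.sqrt β - 1 with htdef
        have ht0 : 0 ≤ t := by
          rw [htdef, sub_nonneg, le_div_iff₀ hsβ, one_mul]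
          exact Real.sqrt_le_sqrt hab.le
        have ht1 : t + 1 = Real.sqrt a / Real.sqrt β := by rw [htdef]; ring
        have hk := key t ht0
        have haa : Real.sqrt a * Real.sqrt a = a := Real.mul_self_sqrt hapos.le
        have hββ : Real.sqrt β * Real.sqrt β = β := Real.mul_self_sqrt hβpos.le
        have ht1pos : (0:ℝ) < t + 1 := by linarith
        have h7 : (t + 1) * (Real.sqrt a * Real.sqrt β) = a := by
          rw [ht1]
          field_simp
          linear_combination haa
        have e1 : a / (t + 1) = Real.sqrt a * Real.sqrt β := by
          conv_lhs => rw [← h7]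
          exact mul_div_cancel_left₀ _ ht1pos.ne'
        have e2 : t * β = Real.sqrt a * Real.sqrt β - β := by
          have h8 : Real.sqrt a / Real.sqrt β * β = Real.sqrt a * Real.sqrt β := by
            rw [div_mul_eq_mul_div, div_eq_iff hsβ.ne']
            linear_combination -Real.sqrt a * hββ
          rw [htdef, sub_mul, one_mul, h8]
        have e : a - a / (t + 1) - t * β = (Real.sqrt a - Real.sqrt β)^2 := by
          rw [e1, e2]
          linear_combination -haa - hββ
        rw [e] at hk
        have h8 : Real.sqrt a - Real.sqrt β ≤ ε := by
          have h9 : Real.sqrt ((Real.sqrt a - Real.sqrt β)^2) ≤ Real.sqrt D :=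
            Real.sqrt_le_sqrt hk
          rw [Real.sqrt_sq_eq_abs] at h9
          calc Real.sqrt a - Real.sqrt β ≤ |Real.sqrt a - Real.sqrt β| := le_abs_self _
            _ ≤ Real.sqrt D := h9
            _ ≤ ε := hG
        linarith
end

section
/- Let Λ be an n×n symmetric matrix, Σ̂ a positive definite symmetric matrix, and γ > 0 such that Σ̂⁻¹ + (2/γ)Λ is positive definite. Then Σ*(γ) := (Σ̂⁻¹ + (2/γ)Λ)⁻¹ is the unique minimizer over positive definite Σ of the function F(Σ) = ⟨Λ, Σ⟩ + (γ/2)(−log det Σ + log det Σ̂ + tr(Σ Σ̂⁻¹) − n). -/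
open Matrix

/-- Frobenius inner product `⟨A, B⟩ = tr(Aᵀ B)`. -/
noncomputable def frobInner {n : ℕ} (A B : Matrix (Fin n) (Fin n) ℝ) : ℝ :=
  (Aᵀ * B).trace

/-- The Lagrangian objective of the KL linear minimization oracle. -/
noncomputable def Ffun {n : ℕ} (Λ Shat : Matrix (Fin n) (Fin n) ℝ) (γ : ℝ)
    (S : Matrix (Fin n) (Fin n) ℝ) : ℝ :=
  frobInner Λ S
    + (γ / 2) * (-(Real.log S.det) + Real.log Shat.det + (S * Shat⁻¹).trace - n)

private lemma trace_eq_sum_eig {n : ℕ} {A : Matrix (Fin n) (Fin n) ℝ} (hA : A.IsHermitian) :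
    A.trace = ∑ i, hA.eigenvalues i := by
  calc A.trace = ((hA.eigenvectorUnitary : Matrix (Fin n) (Fin n) ℝ)
      * diagonal (RCLike.ofReal ∘ hA.eigenvalues)
      * (star (hA.eigenvectorUnitary : Matrix (Fin n) (Fin n) ℝ))).trace := by
        conv_lhs => rw [hA.spectral_theorem, Unitary.conjStarAlgAut_apply]
    _ = (diagonal (RCLike.ofReal ∘ hA.eigenvalues)).trace := by
        rw [trace_mul_cycle, (Matrix.mem_unitaryGroup_iff').mp hA.eigenvectorUnitary.2, one_mul]
    _ = ∑ i, hA.eigenvalues i := by simp [trace_diagonal]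

private lemma eq_one_of_eig_one {n : ℕ} {A : Matrix (Fin n) (Fin n) ℝ} (hA : A.IsHermitian)
    (h1 : ∀ i, hA.eigenvalues i = 1) : A = 1 := by
  have hd : diagonal (RCLike.ofReal ∘ hA.eigenvalues) = (1 : Matrix (Fin n) (Fin n) ℝ) := by
    have : (RCLike.ofReal ∘ hA.eigenvalues) = fun _ => (1:ℝ) := by funext i; simp [h1 i]
    rw [this, diagonal_one]
  rw [hA.spectral_theorem, hd, map_one]

private lemma core_ineq {n : ℕ} {A : Matrix (Fin n) (Fin n) ℝ} (hA : A.PosDef) (hne : A ≠ 1) :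
    (n : ℝ) < A.trace - Real.log A.det := by
  have heigpos := hA.eigenvalues_pos
  have hdet : A.det = ∏ i, hA.1.eigenvalues i := by
    simpa using hA.1.det_eq_prod_eigenvalues
  have hlog : Real.log A.det = ∑ i, Real.log (hA.1.eigenvalues i) := by
    rw [hdet, Real.log_prod]
    exact fun i _ => (heigpos i).ne'
  rw [trace_eq_sum_eig hA.1, hlog, ← Finset.sum_sub_distrib]
  have hcard : (n : ℝ) = ∑ _i : Fin n, (1:ℝ) := by simp
  rw [hcard]
  obtain ⟨j, hj⟩ : ∃ j, hA.1.eigenvalues j ≠ 1 := by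
    by_contra h
    push_neg at h
    exact hne (eq_one_of_eig_one hA.1 h)
  refine Finset.sum_lt_sum (fun i _ => ?_) ⟨j, Finset.mem_univ j, ?_⟩
  · have := Real.log_le_sub_one_of_pos (heigpos i)
    linarith
  · have := Real.log_lt_sub_one_of_pos (heigpos j) hj
    linarith

private lemma posDef_conj {n : ℕ} {R S : Matrix (Fin n) (Fin n) ℝ} (hS : S.PosDef)
    (hR : R.IsHermitian) (hRu : IsUnit R) : (R * S * R).PosDef := by
  rw [posDef_iff_dotProduct_mulVec]
  constructor
  · show (R * S * R)ᴴ = R * S * R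
    have hRt : Rᵀ = R := by simpa using hR.eq
    have hSt : Sᵀ = S := by simpa using hS.1.eq
    simp [conjTranspose_mul, mul_assoc, hRt, hSt]
  · intro x hx
    have hx' : R *ᵥ x ≠ 0 := by
      intro h
      exact hx (Matrix.mulVec_injective_iff_isUnit.mpr hRu (by simpa using h))
    have := hS.dotProduct_mulVec_pos hx'
    simpa only [star_mulVec, dotProduct_mulVec, vecMul_vecMul, hR.eq] using this

open scoped MatrixOrder in
private lemma core_ineq2 {n : ℕ} {M S : Matrix (Fin n) (Fin n) ℝ} (hM : M.PosDef)
    (hS : S.PosDef) (hne : S ≠ M⁻¹) :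
    (n : ℝ) < (M * S).trace - Real.log ((M * S).det) := by
  set R := CFC.sqrt M with hRdef
  have hRpsd := (CFC.sqrt_nonneg M).posSemidef
  have hRH : R.IsHermitian := hRpsd.1
  have hRR : R * R = M := CFC.sqrt_mul_sqrt_self M (Matrix.PosSemidef.nonneg hM.posSemidef)
  have hdetM : 0 < M.det := hM.det_pos
  have hdetR : R.det ≠ 0 := by
    intro h
    rw [← hRR, det_mul, h, mul_zero] at hdetM
    exact lt_irrefl _ hdetM
  have hRu : IsUnit R := (Matrix.isUnit_iff_isUnit_det _).mpr hdetR.isUnit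
  have hA : (R * S * R).PosDef := posDef_conj hS hRH hRu
  have hAne : R * S * R ≠ 1 := by
    intro h1
    apply hne
    letI := hRu.invertible
    have hRS : R⁻¹ = R * S := Matrix.inv_eq_left_inv h1
    have hMS : M * S = 1 := by
      rw [← hRR, Matrix.mul_assoc, ← hRS, Matrix.mul_inv_of_invertible]
    exact (Matrix.inv_eq_right_inv hMS).symm
  have htr : (R * S * R).trace = (M * S).trace := by
    rw [trace_mul_cycle, hRR]
  have hdet : (R * S * R).det = (M * S).det := by
    rw [det_mul, det_mul, det_mul, ← hRR, det_mul]
    ring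
  have := core_ineq hA hAne
  rwa [htr, hdet] at this

theorem stmt_13 {n : ℕ} (Λ Shat : Matrix (Fin n) (Fin n) ℝ)
    (hΛ : Λᵀ = Λ) (hShat : Shat.PosDef) (γ : ℝ) (hγ : 0 < γ)
    (hP : (Shat⁻¹ + (2 / γ) • Λ).PosDef) :
    ((Shat⁻¹ + (2 / γ) • Λ)⁻¹).PosDef ∧
    ∀ S : Matrix (Fin n) (Fin n) ℝ, S.PosDef → S ≠ (Shat⁻¹ + (2 / γ) • Λ)⁻¹ →
      Ffun Λ Shat γ ((Shat⁻¹ + (2 / γ) • Λ)⁻¹) < Ffun Λ Shat γ S := by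
  set M := Shat⁻¹ + (2 / γ) • Λ with hMdef
  refine ⟨hP.inv, fun S hS hne => ?_⟩
  have hγ' : γ ≠ 0 := hγ.ne'
  have hkey : ∀ T : Matrix (Fin n) (Fin n) ℝ,
      Ffun Λ Shat γ T = (γ/2) * ((M*T).trace - Real.log T.det)
        + (γ/2) * (Real.log Shat.det - n) := by
    intro T
    have hMT : (M*T).trace = (Shat⁻¹*T).trace + (2/γ) * (Λ*T).trace := by
      rw [hMdef, add_mul, smul_mul_assoc, trace_add, trace_smul, smul_eq_mul]
    have h1 : frobInner Λ T = (Λ*T).trace := by rw [frobInner, hΛ]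
    have h2 : (T * Shat⁻¹).trace = (Shat⁻¹ * T).trace := trace_mul_comm _ _
    rw [Ffun, h1, h2, hMT]
    field_simp
    ring
  rw [hkey S, hkey M⁻¹]
  have hMMinv : M * M⁻¹ = 1 := Matrix.mul_nonsing_inv M hP.det_pos.ne'.isUnit
  have hlogMinv : Real.log (M⁻¹).det = - Real.log M.det := by
    rw [Matrix.det_nonsing_inv, Ring.inverse_eq_inv', Real.log_inv]
  have hcore := core_ineq2 hP hS hne
  have hdetMS : Real.log ((M*S).det) = Real.log M.det + Real.log S.det := by
    rw [det_mul, Real.log_mul hP.det_pos.ne' hS.det_pos.ne']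
  rw [hdetMS] at hcore
  have htr1 : (M * M⁻¹).trace = (n : ℝ) := by rw [hMMinv, trace_one]; simp
  have hlt : (M*M⁻¹).trace - Real.log (M⁻¹).det < (M*S).trace - Real.log S.det := by
    rw [htr1, hlogMinv]
    linarith
  have hγ2 : 0 < γ/2 := by linarith
  have := mul_lt_mul_of_pos_left hlt hγ2
  linarith
end
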